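/- For any sequence of instances of the binary voting model there exist a single strategy σ' = (β_l, β_h) ∈ [0,1]² and constants N₀ > 0 and φ > 0 such that, letting Σ'_N be the regular strategy profile in which every contingent agent plays σ' (friendly agents always vote A, unfriendly agents always vote R), one has A(Σ'_N) ≥ 1 − 2·exp(−2·φ²·N) for all N > N₀; in particular the fidelities A(Σ'_N) converge to 1. -/

import Mathlib

namespace Voting

/-- The two world states: `L` (low) and `H` (high). -/
inductive WState : Type
  | L
  | H
deriving DecidableEq

instance : Fintype WState :=
  ⟨{WState.L, WState.H}, fun x => by cases x <;> simp⟩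

/-- The two alternatives: `A` (accept) and `R` (reject). -/
inductive Alt : Type
  | A
  | R
deriving DecidableEq

instance : Fintype Alt :=
  ⟨{Alt.A, Alt.R}, fun x => by cases x <;> simp⟩

/-- The shared parameters of a binary voting instance. -/
structure BParams where
  /-- majority threshold -/
  μ : ℝ
  hμ0 : 0 < μ
  hμ1 : μ < 1
  /-- prior of state `L` -/
  PL : ℝ
  /-- prior of state `H` -/
  PH : ℝ
  hPL : 0 < PL
  hPH : 0 < PH
  hPsum : PL + PH = 1
  /-- `Psig s ω` : probability of signal `s` in state `ω`; `true` is the signal `h`,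
  `false` is the signal `l`. -/
  Psig : Bool → WState → ℝ
  hPsig : ∀ s ω, 0 ≤ Psig s ω
  hPsigsum : ∀ ω, Psig false ω + Psig true ω = 1
  /-- positive correlation: `P_{hH} > P_{hL}` -/
  hcorr : Psig true WState.L < Psig true WState.H
  /-- upper bound of the utility functions -/
  B : ℕ
  hB : 0 < B

/-- A binary voting instance with `N` agents. -/
structure BInstance extends BParams where
  N : ℕ
  /-- the utility function of each agent -/
  u : Fin N → WState → Alt → ℕ
  hub : ∀ n ω a, u n ω a ≤ B
  huA : ∀ n, u n WState.L Alt.A < u n WState.H Alt.A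
  huR : ∀ n, u n WState.H Alt.R < u n WState.L Alt.R

/-- A (mixed) strategy profile: for each agent, the probability of voting for `A`
upon each signal. -/
abbrev Profile (I : BInstance) : Type := Fin I.N → Bool → ℝ

/-- All coordinates of the profile are genuine probabilities. -/
def ValidProfile (I : BInstance) (sp : Profile I) : Prop :=
  ∀ n s, 0 ≤ sp n s ∧ sp n s ≤ 1

/-- Probability that agent `n` votes for `A`, conditioned on the world state `ω`. -/
noncomputable def pA (I : BInstance) (sp : Profile I) (n : Fin I.N) (ω : WState) : ℝ :=
  I.Psig false ω * sp n false + I.Psig true ω * sp n true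

open Finset in
/-- `lambdaA I sp ω` : the probability that at least `μ·N` agents vote for `A`,
conditioned on the world state `ω` (conditionally on the state, the votes are independent,
agent `n` voting for `A` with probability `pA I sp n ω`). -/
noncomputable def lambdaA (I : BInstance) (sp : Profile I) (ω : WState) : ℝ :=
  ∑ v : Fin I.N → Bool,
    if I.μ * (I.N : ℝ) ≤ ((univ.filter fun n => v n = true).card : ℝ) then
      ∏ n, (if v n = true then pA I sp n ω else 1 - pA I sp n ω)
    else 0

/-- The fidelity of a strategy profile: the probability that the informed majority
decision is reached. -/
noncomputable def fid (I : BInstance) (sp : Profile I) : ℝ :=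
  I.PL * (1 - lambdaA I sp WState.L) + I.PH * lambdaA I sp WState.H

/-- The ex-ante expected utility of agent `n` under profile `sp`. -/
noncomputable def ut (I : BInstance) (sp : Profile I) (n : Fin I.N) : ℝ :=
  I.PL * (lambdaA I sp WState.L * (I.u n WState.L Alt.A : ℝ)
      + (1 - lambdaA I sp WState.L) * (I.u n WState.L Alt.R : ℝ))
    + I.PH * (lambdaA I sp WState.H * (I.u n WState.H Alt.A : ℝ)
      + (1 - lambdaA I sp WState.H) * (I.u n WState.H Alt.R : ℝ))

/-- A friendly agent prefers `A` in both states. -/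
def Friendly (I : BInstance) (n : Fin I.N) : Prop :=
  ∀ ω, I.u n ω Alt.R < I.u n ω Alt.A

/-- An unfriendly agent prefers `R` in both states. -/
def Unfriendly (I : BInstance) (n : Fin I.N) : Prop :=
  ∀ ω, I.u n ω Alt.A < I.u n ω Alt.R

/-- A contingent agent prefers `A` in state `H` and `R` in state `L`. -/
def Contingent (I : BInstance) (n : Fin I.N) : Prop :=
  I.u n WState.H Alt.R < I.u n WState.H Alt.A ∧ I.u n WState.L Alt.A < I.u n WState.L Alt.R

/-- A profile is regular if every friendly agent always votes for `A` and every
unfriendly agent always votes for `R`. -/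
def Regular (I : BInstance) (sp : Profile I) : Prop :=
  (∀ n, Friendly I n → ∀ s, sp n s = 1) ∧ (∀ n, Unfriendly I n → ∀ s, sp n s = 0)

/-- `ε`-strong Bayes Nash Equilibrium: no coalition `D` can deviate so that no member
is worse off and some member gains more than `ε`. -/
def IsEpsBNE (I : BInstance) (sp : Profile I) (ε : ℝ) : Prop :=
  ¬ ∃ (D : Set (Fin I.N)) (sp' : Profile I),
      ValidProfile I sp' ∧
      (∀ n, n ∉ D → sp' n = sp n) ∧
      (∀ n ∈ D, ut I sp n ≤ ut I sp' n) ∧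
      (∃ n ∈ D, ut I sp n + ε < ut I sp' n)

/-- Number of friendly agents. -/
noncomputable def friendlyCount (I : BInstance) : ℕ := {n | Friendly I n}.ncard

/-- Number of unfriendly agents. -/
noncomputable def unfriendlyCount (I : BInstance) : ℕ := {n | Unfriendly I n}.ncard

/-- Number of contingent agents. -/
noncomputable def contingentCount (I : BInstance) : ℕ := {n | Contingent I n}.ncard

/-- A sequence of binary voting instances sharing the same parameters, in which the
instance indexed by `N` has `N` agents. -/
structure BSeq where
  params : BParams
  inst : ℕ → BInstance
  hN : ∀ N, (inst N).N = N
  hshare : ∀ N, (inst N).toBParams = params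

/-- A sequence of binary voting instances with fixed approximate fractions
`(αF, αU, αC)` of friendly, unfriendly and contingent agents. -/
structure BSeqFrac extends BSeq where
  αF : ℝ
  αU : ℝ
  αC : ℝ
  hαF0 : 0 ≤ αF
  hαU0 : 0 ≤ αU
  hαC0 : 0 ≤ αC
  hαsum : αF + αU + αC = 1
  hαFμ : αF < params.μ
  hαUμ : αU < 1 - params.μ
  hNF : ∀ N : ℕ, friendlyCount (inst N) = ⌊αF * (N : ℝ)⌋₊
  hNU : ∀ N : ℕ, unfriendlyCount (inst N) = ⌊αU * (N : ℝ)⌋₊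
  hNC : ∀ N : ℕ, contingentCount (inst N) = N - ⌊αF * (N : ℝ)⌋₊ - ⌊αU * (N : ℝ)⌋₊

open Classical in
/-- The regular strategy profile in which every contingent agent plays `σ'`,
every friendly agent always votes for `A` and every unfriendly agent always
votes for `R`. -/
noncomputable def devProfile (S : BSeqFrac) (σ' : Bool → ℝ) (N : ℕ) :
    Profile (S.inst N) := fun n s =>
  if Friendly (S.inst N) n then 1 else if Unfriendly (S.inst N) n then 0 else σ' s

noncomputable def tailGE (N : ℕ) (p : Fin N → ℝ) (a : ℝ) : ℝ :=
  ∑ v : Fin N → Bool,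
    if a ≤ ((Finset.univ.filter fun n => v n = true).card : ℝ) then
      ∏ n, (if v n = true then p n else 1 - p n)
    else 0

variable {N : ℕ}

lemma sum_prod_bool (f : Fin N → Bool → ℝ) :
    ∑ v : Fin N → Bool, ∏ n, f n (v n) = ∏ n, (f n false + f n true) := by
  have h : ∀ n : Fin N, f n false + f n true = ∑ b : Bool, f n b := by
    intro n; rw [Fintype.sum_bool]; ring
  simp_rw [h]
  rw [Finset.prod_univ_sum]
  rw [Fintype.piFinset_univ]

lemma card_filter_real (v : Fin N → Bool) :
    ((Finset.univ.filter fun n => v n = true).card : ℝ)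
      = ∑ n, (if v n = true then (1:ℝ) else 0) := by
  rw [Finset.card_filter]
  push_cast
  rfl

lemma prod_ite_nonneg {p : Fin N → ℝ} (hp : ∀ n, 0 ≤ p n ∧ p n ≤ 1) (v : Fin N → Bool) :
    0 ≤ ∏ n, (if v n = true then p n else 1 - p n) := by
  apply Finset.prod_nonneg
  intro n _
  by_cases h : v n = true <;> simp [h] <;> [exact (hp n).1; linarith [(hp n).2]]

lemma sum_W (p : Fin N → ℝ) :
    ∑ v : Fin N → Bool, ∏ n, (if v n = true then p n else 1 - p n) = 1 := by
  rw [sum_prod_bool (fun n b => if b = true then p n else 1 - p n)]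
  simp

lemma mgf (p : Fin N → ℝ) (t : ℝ) :
    ∑ v : Fin N → Bool, Real.exp (t * ∑ n, (if v n = true then (1:ℝ) else 0))
        * ∏ n, (if v n = true then p n else 1 - p n)
      = ∏ n, ((1 - p n) + p n * Real.exp t) := by
  have h : ∀ v : Fin N → Bool,
      Real.exp (t * ∑ n, (if v n = true then (1:ℝ) else 0))
        * ∏ n, (if v n = true then p n else 1 - p n)
      = ∏ n, ((fun n b => Real.exp (t * if b = true then (1:ℝ) else 0)
          * (if b = true then p n else 1 - p n)) n (v n)) := by
    intro v
    rw [Finset.mul_sum, Real.exp_sum, ← Finset.prod_mul_distrib]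
  simp_rw [h]
  have key := sum_prod_bool (f := fun n b =>
    Real.exp (t * if b = true then (1:ℝ) else 0) * (if b = true then p n else 1 - p n))
  beta_reduce at key
  rw [key]
  congr 1; funext n
  simp [mul_comm]

lemma tailGE_nonneg (p : Fin N → ℝ) (hp : ∀ n, 0 ≤ p n ∧ p n ≤ 1) (a : ℝ) :
    0 ≤ tailGE N p a := by
  apply Finset.sum_nonneg
  intro v _
  split
  · exact prod_ite_nonneg hp v
  · exact le_rfl

lemma tailGE_le_one (p : Fin N → ℝ) (hp : ∀ n, 0 ≤ p n ∧ p n ≤ 1) (a : ℝ) :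
    tailGE N p a ≤ 1 := by
  rw [← sum_W p]
  apply Finset.sum_le_sum
  intro v _
  split
  · exact le_rfl
  · exact prod_ite_nonneg hp v

lemma tailGE_le (p : Fin N → ℝ) (hp : ∀ n, 0 ≤ p n ∧ p n ≤ 1) (a ε : ℝ)
    (hε0 : 0 < ε) (hε1 : ε ≤ 1) (hm : (∑ n, p n) + ε * N ≤ a) :
    tailGE N p a ≤ Real.exp (-(3 * ε ^ 2 / 32) * N) := by
  set t : ℝ := ε / 8 with ht_def
  have ht0 : 0 < t := by positivity
  have ht2 : t ≤ 1 / 2 := by rw [ht_def]; linarith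
  -- step 1: pointwise bound
  have step1 : tailGE N p a
      ≤ ∑ v : Fin N → Bool, Real.exp (t * ((∑ n, (if v n = true then (1:ℝ) else 0)) - a))
          * ∏ n, (if v n = true then p n else 1 - p n) := by
    apply Finset.sum_le_sum
    intro v _
    rw [← card_filter_real]
    split
    · rename_i h
      nth_rewrite 1 [← one_mul (∏ n, _)]
      apply mul_le_mul_of_nonneg_right _ (prod_ite_nonneg hp v)
      rw [← Real.exp_zero]
      apply Real.exp_le_exp.2
      nlinarith
    · exact mul_nonneg (Real.exp_nonneg _) (prod_ite_nonneg hp v)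
  -- step 2: compute the MGF sum
  have step2 : ∑ v : Fin N → Bool,
        Real.exp (t * ((∑ n, (if v n = true then (1:ℝ) else 0)) - a))
          * ∏ n, (if v n = true then p n else 1 - p n)
      = Real.exp (-(t * a)) * ∏ n, ((1 - p n) + p n * Real.exp t) := by
    rw [← mgf p t, Finset.mul_sum]
    congr 1; funext v
    rw [← mul_assoc, ← Real.exp_add]
    ring_nf
  refine le_trans step1 (le_trans (le_of_eq step2) ?_)
  -- step 3: bound the product
  have hfac : ∀ n : Fin N, (1 - p n) + p n * Real.exp t ≤ Real.exp (p n * (Real.exp t - 1)) := by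
    intro n
    have := Real.add_one_le_exp (p n * (Real.exp t - 1))
    linarith
  have hprod : ∏ n, ((1 - p n) + p n * Real.exp t)
      ≤ Real.exp ((Real.exp t - 1) * ∑ n, p n) := by
    calc ∏ n, ((1 - p n) + p n * Real.exp t)
        ≤ ∏ n, Real.exp (p n * (Real.exp t - 1)) := by
          apply Finset.prod_le_prod _ (fun n _ => hfac n)
          intro n _
          have h1 := Real.one_le_exp (le_of_lt ht0)
          nlinarith [(hp n).1, (hp n).2]
      _ = Real.exp (∑ n, p n * (Real.exp t - 1)) := (Real.exp_sum _ _).symm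
      _ = Real.exp ((Real.exp t - 1) * ∑ n, p n) := by rw [← Finset.sum_mul]; ring_nf
  have key : Real.exp (-(t * a)) * ∏ n, ((1 - p n) + p n * Real.exp t)
      ≤ Real.exp (-(t * a)) * Real.exp ((Real.exp t - 1) * ∑ n, p n) :=
    mul_le_mul_of_nonneg_left hprod (Real.exp_nonneg _)
  refine le_trans key ?_
  rw [← Real.exp_add]
  apply Real.exp_le_exp.2
  -- exponent inequality
  have hm0 : 0 ≤ ∑ n, p n := Finset.sum_nonneg fun n _ => (hp n).1
  have hmN : ∑ n, p n ≤ N := by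
    calc ∑ n, p n ≤ ∑ _n : Fin N, (1:ℝ) := Finset.sum_le_sum fun n _ => (hp n).2
      _ = N := by simp
  have hexp : Real.exp t - 1 ≤ t + 2 * t ^ 2 := by
    have h1 : 1 - t ≤ Real.exp (-t) := by linarith [Real.add_one_le_exp (-t)]
    have h2 : Real.exp t * Real.exp (-t) = 1 := by rw [← Real.exp_add]; simp
    have h3 : Real.exp t * (1 - t) ≤ 1 := by nlinarith [Real.exp_nonneg t]
    nlinarith [Real.exp_nonneg t]
  have hN0 : (0:ℝ) ≤ N := Nat.cast_nonneg N
  have h4 : (Real.exp t - 1) * ∑ n, p n ≤ (t + 2 * t ^ 2) * ∑ n, p n := by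
    apply mul_le_mul_of_nonneg_right hexp hm0
  have h5 : t * (∑ n, p n) + t * (ε * N) ≤ t * a := by
    rw [← mul_add]; exact mul_le_mul_of_nonneg_left hm (le_of_lt ht0)
  have h6 : 2 * t ^ 2 * (∑ n, p n) ≤ 2 * t ^ 2 * N := by nlinarith
  rw [ht_def] at *
  nlinarith

lemma one_sub_tailGE_le (p : Fin N → ℝ) (hp : ∀ n, 0 ≤ p n ∧ p n ≤ 1) (a ε : ℝ)
    (hε0 : 0 < ε) (hε1 : ε ≤ 1) (hm : a + ε * N ≤ ∑ n, p n) :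
    1 - tailGE N p a ≤ Real.exp (-(3 * ε ^ 2 / 32) * N) := by
  set t : ℝ := ε / 8 with ht_def
  have ht0 : 0 < t := by positivity
  have ht2 : t ≤ 1 / 2 := by rw [ht_def]; linarith
  have hcompl : 1 - tailGE N p a
      = ∑ v : Fin N → Bool,
          if a ≤ ((Finset.univ.filter fun n => v n = true).card : ℝ) then 0
          else ∏ n, (if v n = true then p n else 1 - p n) := by
    have hadd : tailGE N p a
        + ∑ v : Fin N → Bool,
            (if a ≤ ((Finset.univ.filter fun n => v n = true).card : ℝ) then 0
              else ∏ n, (if v n = true then p n else 1 - p n))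
        = ∑ v : Fin N → Bool, ∏ n, (if v n = true then p n else 1 - p n) := by
      unfold tailGE
      rw [← Finset.sum_add_distrib]
      congr 1; funext v
      split <;> ring
    have := sum_W p
    linarith
  rw [hcompl]
  have step1 : ∑ v : Fin N → Bool,
        (if a ≤ ((Finset.univ.filter fun n => v n = true).card : ℝ) then 0
          else ∏ n, (if v n = true then p n else 1 - p n))
      ≤ ∑ v : Fin N → Bool,
          Real.exp (t * (a - ∑ n, (if v n = true then (1:ℝ) else 0)))
            * ∏ n, (if v n = true then p n else 1 - p n) := by
    apply Finset.sum_le_sum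
    intro v _
    rw [← card_filter_real]
    split
    · exact mul_nonneg (Real.exp_nonneg _) (prod_ite_nonneg hp v)
    · rename_i h
      push_neg at h
      nth_rewrite 1 [← one_mul (∏ n, _)]
      apply mul_le_mul_of_nonneg_right _ (prod_ite_nonneg hp v)
      rw [← Real.exp_zero]
      apply Real.exp_le_exp.2
      nlinarith
  refine le_trans step1 ?_
  have step2 : ∑ v : Fin N → Bool,
        Real.exp (t * (a - ∑ n, (if v n = true then (1:ℝ) else 0)))
          * ∏ n, (if v n = true then p n else 1 - p n)
      = Real.exp (t * a) * ∏ n, ((1 - p n) + p n * Real.exp (-t)) := by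
    rw [← mgf p (-t), Finset.mul_sum]
    congr 1; funext v
    rw [← mul_assoc, ← Real.exp_add]
    ring_nf
  rw [step2]
  have hfac : ∀ n : Fin N, (1 - p n) + p n * Real.exp (-t)
      ≤ Real.exp (-(p n * (1 - Real.exp (-t)))) := by
    intro n
    have := Real.add_one_le_exp (-(p n * (1 - Real.exp (-t))))
    linarith
  have hexpneg : (0:ℝ) < Real.exp (-t) := Real.exp_pos _
  have hent : Real.exp (-t) ≤ 1 := by
    rw [Real.exp_le_one_iff]; linarith
  have hprod : ∏ n, ((1 - p n) + p n * Real.exp (-t))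
      ≤ Real.exp (-(1 - Real.exp (-t)) * ∑ n, p n) := by
    calc ∏ n, ((1 - p n) + p n * Real.exp (-t))
        ≤ ∏ n, Real.exp (-(p n * (1 - Real.exp (-t)))) := by
          apply Finset.prod_le_prod _ (fun n _ => hfac n)
          intro n _
          nlinarith [(hp n).1, (hp n).2]
      _ = Real.exp (∑ n, -(p n * (1 - Real.exp (-t)))) := (Real.exp_sum _ _).symm
      _ = Real.exp (-(1 - Real.exp (-t)) * ∑ n, p n) := by
          congr 1
          have hq : ∀ n : Fin N, -(p n * (1 - Real.exp (-t)))
              = p n * (-(1 - Real.exp (-t))) := fun n => by ring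
          simp_rw [hq]
          rw [← Finset.sum_mul]
          ring
  have key : Real.exp (t * a) * ∏ n, ((1 - p n) + p n * Real.exp (-t))
      ≤ Real.exp (t * a) * Real.exp (-(1 - Real.exp (-t)) * ∑ n, p n) :=
    mul_le_mul_of_nonneg_left hprod (Real.exp_nonneg _)
  refine le_trans key ?_
  rw [← Real.exp_add]
  apply Real.exp_le_exp.2
  have hm0 : 0 ≤ ∑ n, p n := Finset.sum_nonneg fun n _ => (hp n).1
  have hmN : ∑ n, p n ≤ N := by
    calc ∑ n, p n ≤ ∑ _n : Fin N, (1:ℝ) := Finset.sum_le_sum fun n _ => (hp n).2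
      _ = N := by simp
  have hN0 : (0:ℝ) ≤ N := Nat.cast_nonneg N
  have hexp2 : Real.exp (-t) ≤ 1 - t + t ^ 2 := by
    have h2 : Real.exp (-t) * (1 + t) ≤ 1 := by
      have h1 := Real.add_one_le_exp t
      have h3 : Real.exp (-t) * Real.exp t = 1 := by rw [← Real.exp_add]; simp
      nlinarith [Real.exp_pos (-t)]
    nlinarith [Real.exp_pos (-t), pow_pos ht0 3]
  have h5 : t * a + t * (ε * N) ≤ t * ∑ n, p n := by
    rw [← mul_add]; exact mul_le_mul_of_nonneg_left hm (le_of_lt ht0)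
  have h6 : (1 - Real.exp (-t)) * ∑ n, p n ≥ (t - t ^ 2) * ∑ n, p n := by
    apply mul_le_mul_of_nonneg_right _ hm0
    linarith
  have h7 : t ^ 2 * (∑ n, p n) ≤ t ^ 2 * N := by nlinarith
  rw [ht_def] at *
  nlinarith


lemma pA_mem (I : BInstance) (sp : Profile I) (h : ValidProfile I sp) (n : Fin I.N) (ω : WState) :
    0 ≤ pA I sp n ω ∧ pA I sp n ω ≤ 1 := by
  have h0 := (h n false).1
  have h1 := (h n false).2
  have h2 := (h n true).1
  have h3 := (h n true).2
  have hs0 := I.hPsig false ω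
  have hs1 := I.hPsig true ω
  have hsum := I.hPsigsum ω
  unfold pA
  constructor
  · positivity
  · nlinarith

lemma lambdaA_eq_tailGE (I : BInstance) (sp : Profile I) (ω : WState) :
    lambdaA I sp ω = tailGE I.N (fun n => pA I sp n ω) (I.μ * I.N) := rfl

lemma ncard_setOf {α : Type*} [Fintype α] (p : α → Prop) [DecidablePred p] :
    {x | p x}.ncard = (Finset.univ.filter p).card := by
  simp [Set.ncard_eq_toFinset_card', Set.toFinset_setOf]

lemma card_three {α : Type*} [Fintype α] (p q : α → Prop) [DecidablePred p] [DecidablePred q]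
    (h : ∀ a, p a → q a → False) :
    (Finset.univ.filter p).card + (Finset.univ.filter q).card
      + (Finset.univ.filter fun a => ¬ p a ∧ ¬ q a).card = Fintype.card α := by
  classical
  have h1 := Finset.card_filter_add_card_filter_not (s := (Finset.univ : Finset α))
    (p := p)
  have h2 := Finset.card_filter_add_card_filter_not
    (s := Finset.univ.filter (fun a => ¬ p a)) (p := q)
  have h3 : (Finset.univ.filter fun a => ¬ p a).filter q = Finset.univ.filter q := by
    ext a
    simp only [Finset.mem_filter, Finset.mem_univ, true_and]
    exact ⟨fun hh => hh.2, fun hq => ⟨fun hp => h a hp hq, hq⟩⟩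
  have h4 : (Finset.univ.filter fun a => ¬ p a).filter (fun a => ¬ q a)
      = Finset.univ.filter fun a => ¬ p a ∧ ¬ q a := by
    rw [Finset.filter_filter]
  rw [h3, h4] at h2
  rw [Finset.card_univ] at h1
  omega

open Classical in
lemma mean_devProfile (S : BSeqFrac) (σ' : Bool → ℝ) (N : ℕ) (ω : WState) :
    ∑ n, pA (S.inst N) (devProfile S σ' N) n ω
      = ((Finset.univ.filter fun n => Friendly (S.inst N) n).card : ℝ)
        + ((Finset.univ.filter fun n =>
              ¬ Friendly (S.inst N) n ∧ ¬ Unfriendly (S.inst N) n).card : ℝ)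
          * ((S.inst N).Psig false ω * σ' false + (S.inst N).Psig true ω * σ' true) := by
  have hstep : ∀ n : Fin (S.inst N).N, pA (S.inst N) (devProfile S σ' N) n ω
      = if Friendly (S.inst N) n then 1 else if Unfriendly (S.inst N) n then 0
        else ((S.inst N).Psig false ω * σ' false + (S.inst N).Psig true ω * σ' true) := by
    intro n
    by_cases hF : Friendly (S.inst N) n
    · rw [if_pos hF]
      simp only [pA, devProfile, if_pos hF]
      have := (S.inst N).hPsigsum ω
      ring_nf
      linarith
    · rw [if_neg hF]
      by_cases hU : Unfriendly (S.inst N) n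
      · rw [if_pos hU]
        simp only [pA, devProfile, if_neg hF, if_pos hU]
        ring
      · rw [if_neg hU]
        simp only [pA, devProfile, if_neg hF, if_neg hU]
  rw [Finset.sum_congr rfl fun n _ => hstep n]
  rw [Finset.sum_ite, Finset.sum_ite]
  simp only [Finset.sum_const, nsmul_eq_mul, mul_one, mul_zero, Finset.filter_filter,
    smul_eq_mul, add_zero, zero_add]

set_option maxHeartbeats 2000000 in
/-- Theorem 3 of the paper. For any sequence of instances there are a
single valid strategy `σ'` and constants `N₀ > 0`, `φ > 0` such that the regular profile
in which every contingent agent plays `σ'` has fidelity at least `1 - 2·exp(-2·φ²·N)`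
for all `N > N₀`; in particular the fidelities converge to `1`. -/
theorem exists_high_fidelity_deviation (S : BSeqFrac) :
    ∃ σ' : Bool → ℝ, (∀ s, 0 ≤ σ' s ∧ σ' s ≤ 1) ∧
      ∃ (N₀ : ℕ) (φ : ℝ), 0 < N₀ ∧ 0 < φ ∧
        (∀ N : ℕ, N₀ < N →
          1 - 2 * Real.exp (-2 * φ ^ 2 * (N : ℝ)) ≤ fid (S.inst N) (devProfile S σ' N)) ∧
        Filter.Tendsto (fun N => fid (S.inst N) (devProfile S σ' N)) Filter.atTop (nhds 1) := by
  classical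
  have hμ0 := S.params.hμ0
  have hμ1 := S.params.hμ1
  have hαF0 := S.hαF0
  have hαU0 := S.hαU0
  have hαFμ := S.hαFμ
  have hαUμ := S.hαUμ
  have hαsum := S.hαsum
  have hαC : 0 < S.αC := by linarith
  set ts : ℝ := (S.params.μ - S.αF) / S.αC with hts_def
  have hts0 : 0 < ts := div_pos (by linarith) hαC
  have hts1 : ts < 1 := (div_lt_one hαC).2 (by linarith)
  have htsmul : S.αC * ts = S.params.μ - S.αF := by
    rw [hts_def]; field_simp
  set pl : ℝ := S.params.Psig true WState.L with hpl_def
  set ph : ℝ := S.params.Psig true WState.H with hph_def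
  have hpL0 : 0 ≤ pl := S.params.hPsig true WState.L
  have hpH1 : ph ≤ 1 := by
    have h1 := S.params.hPsigsum WState.H
    have h2 := S.params.hPsig false WState.H
    rw [hph_def]; linarith
  have hcorr : pl < ph := S.params.hcorr
  set δ : ℝ := min ts (1 - ts) with hδdef
  have hδ0 : 0 < δ := lt_min hts0 (by linarith)
  have hδts : δ ≤ ts := min_le_left _ _
  have hδts' : δ ≤ 1 - ts := min_le_right _ _
  set βl : ℝ := ts - (pl + ph) / 2 * δ with hβl_def
  set σ' : Bool → ℝ := fun s => if s then βl + δ else βl with hσ'_def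
  have hsum2 : pl + ph ≤ 2 := by linarith
  have hsum0 : 0 ≤ pl + ph := by linarith
  have hβl0 : 0 ≤ βl := by
    rw [hβl_def]
    have h := mul_le_mul (by linarith : (pl + ph) / 2 ≤ 1) hδts hδ0.le zero_le_one
    linarith
  have hβlts : βl ≤ ts := by
    rw [hβl_def]
    have h := mul_nonneg (by linarith : (0:ℝ) ≤ (pl + ph) / 2) hδ0.le
    linarith
  have hβδ1 : βl + δ ≤ 1 := by linarith
  have hσ'mem : ∀ s, 0 ≤ σ' s ∧ σ' s ≤ 1 := by
    intro s
    cases s <;> simp only [hσ'_def, Bool.false_eq_true, if_false, if_true] <;>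
      constructor <;> linarith
  set γ : ℝ := (ph - pl) / 2 * δ with hγdef
  have hγ0 : 0 < γ := by
    rw [hγdef]
    have : 0 < ph - pl := by linarith
    positivity
  set ε : ℝ := S.αC * γ / 2 with hεdef
  have hε0 : 0 < ε := by
    rw [hεdef]
    exact div_pos (mul_pos hαC hγ0) two_pos
  have hαC1 : S.αC ≤ 1 := by linarith
  have hδ1 : δ ≤ 1 := by linarith
  have hγhalf : γ ≤ 1 / 2 := by
    rw [hγdef]
    have h := mul_le_mul (by linarith : (ph - pl) / 2 ≤ 1 / 2) hδ1 hδ0.le (by norm_num)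
    linarith
  have hε1 : ε ≤ 1 := by
    rw [hεdef]
    have h := mul_le_mul hαC1 hγhalf hγ0.le zero_le_one
    linarith
  -- validity of the deviation profile
  have hvalid : ∀ N, ValidProfile (S.inst N) (devProfile S σ' N) := by
    intro N n s
    unfold devProfile
    split_ifs with h1 h2
    · norm_num
    · norm_num
    · exact hσ'mem s
  -- the two q values
  have hqvals : ∀ ω, S.params.Psig false ω * σ' false + S.params.Psig true ω * σ' true
      = βl + S.params.Psig true ω * δ := by
    intro ω
    have h := S.params.hPsigsum ω
    simp only [hσ'_def, if_true, Bool.false_eq_true, if_false]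
    linear_combination βl * h
  have hqL : βl + pl * δ = ts - γ := by rw [hβl_def, hγdef]; ring
  have hqH : βl + ph * δ = ts + γ := by rw [hβl_def, hγdef]; ring
  have hqL0 : 0 ≤ ts - γ := by
    rw [← hqL]
    have h := mul_nonneg hpL0 hδ0.le
    linarith
  have hqL1 : ts - γ ≤ 1 := by linarith
  have hqH0 : 0 ≤ ts + γ := by linarith
  have hqH1 : ts + γ ≤ 1 := by
    rw [← hqH]
    have h := mul_le_mul_of_nonneg_right hpH1 hδ0.le
    linarith
  -- the key per-N fidelity bound
  have key : ∀ N : ℕ, (⌈2 / ε⌉₊ + 1 : ℕ) < N →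
      1 - 2 * Real.exp (-2 * (ε / 8) ^ 2 * (N : ℝ))
        ≤ fid (S.inst N) (devProfile S σ' N) := by
    intro N hNgt
    have hPeq : (S.inst N).toBParams = S.params := S.hshare N
    have hNN : (S.inst N).N = N := S.hN N
    have hμI : (S.inst N).μ = S.params.μ := by rw [hPeq]
    have hPsigI : (S.inst N).Psig = S.params.Psig := by rw [hPeq]
    have hPLI : (S.inst N).PL = S.params.PL := by rw [hPeq]
    have hPHI : (S.inst N).PH = S.params.PH := by rw [hPeq]
    -- epsilon * N is large
    have h2ε : 2 < ε * N := by
      have h1 : ((⌈2 / ε⌉₊ : ℕ) : ℝ) < (N : ℝ) := by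
        exact_mod_cast Nat.lt_of_succ_lt hNgt
      have h2 := Nat.le_ceil (2 / ε)
      have h3 : 2 / ε < (N : ℝ) := lt_of_le_of_lt h2 h1
      rw [div_lt_iff₀ hε0] at h3
      linarith only [h3]
    have hN0 : (0:ℝ) ≤ N := Nat.cast_nonneg N
    -- counting
    set NF : ℕ := (Finset.univ.filter fun n => Friendly (S.inst N) n).card with hNFdef
    set NU : ℕ := (Finset.univ.filter fun n => Unfriendly (S.inst N) n).card with hNUdef
    set K : ℕ := (Finset.univ.filter fun n =>
      ¬ Friendly (S.inst N) n ∧ ¬ Unfriendly (S.inst N) n).card with hKdef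
    have hdisj : ∀ n, Friendly (S.inst N) n → Unfriendly (S.inst N) n → False := by
      intro n hF hU
      exact absurd (hF WState.H) (not_lt.2 (le_of_lt (hU WState.H)))
    have hcards : NF + NU + K = N := by
      rw [hNFdef, hNUdef, hKdef, card_three _ _ hdisj, Fintype.card_fin, hNN]
    have hNFval : NF = ⌊S.αF * (N : ℝ)⌋₊ := by
      rw [← S.hNF N]
      unfold friendlyCount
      rw [ncard_setOf]
    have hNUval : NU = ⌊S.αU * (N : ℝ)⌋₊ := by
      rw [← S.hNU N]
      unfold unfriendlyCount
      rw [ncard_setOf]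
    have hNF_le : (NF : ℝ) ≤ S.αF * N := by
      rw [hNFval]; exact Nat.floor_le (by positivity)
    have hNF_ge : S.αF * N - 1 ≤ (NF : ℝ) := by
      rw [hNFval]; linarith [Nat.sub_one_lt_floor (S.αF * N)]
    have hNU_le : (NU : ℝ) ≤ S.αU * N := by
      rw [hNUval]; exact Nat.floor_le (by positivity)
    have hNU_ge : S.αU * N - 1 ≤ (NU : ℝ) := by
      rw [hNUval]; linarith [Nat.sub_one_lt_floor (S.αU * N)]
    have hKreal : (K : ℝ) = (N : ℝ) - NF - NU := by
      have : ((NF + NU + K : ℕ) : ℝ) = (N : ℝ) := by rw [hcards]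
      push_cast at this
      linarith
    -- the means
    have hmean : ∀ ω, ∑ n, pA (S.inst N) (devProfile S σ' N) n ω
        = (NF : ℝ) + (K : ℝ) * (βl + S.params.Psig true ω * δ) := by
      intro ω
      rw [mean_devProfile S σ' N ω, hPsigI, hqvals ω]
    -- tail bounds
    have hlamL : lambdaA (S.inst N) (devProfile S σ' N) WState.L
        ≤ Real.exp (-(3 * ε ^ 2 / 32) * ((S.inst N).N : ℝ)) := by
      rw [lambdaA_eq_tailGE]
      apply tailGE_le _ (fun n => pA_mem _ _ (hvalid N) n _) _ ε hε0 hε1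
      rw [hmean WState.L, ← hpl_def, hqL, hμI, hNN]
      have hK_le : (K : ℝ) ≤ S.αC * N + 2 := by
        rw [hKreal]
        have hα : S.αC = 1 - S.αF - S.αU := by linarith
        rw [hα]
        linarith only [hNF_ge, hNU_ge]
      have h1 : (K : ℝ) * (ts - γ) ≤ (S.αC * N + 2) * (ts - γ) :=
        mul_le_mul_of_nonneg_right hK_le hqL0
      have h2 : (S.αC * N + 2) * (ts - γ) ≤ S.αC * N * ts - S.αC * N * γ + 2 := by
        have : (S.αC * N + 2) * (ts - γ) = S.αC * N * ts - S.αC * N * γ + 2 * (ts - γ) := by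
          ring
        rw [this]
        linarith only [hqL1]
      have h3 : S.αC * N * ts = (S.params.μ - S.αF) * N := by
        rw [mul_comm (S.αC) (N:ℝ), mul_assoc, htsmul]; ring
      have h4 : S.αC * N * γ = 2 * ε * N := by rw [hεdef]; ring
      have h5 : (NF : ℝ) + (K : ℝ) * (ts - γ)
          ≤ S.αF * N + ((S.params.μ - S.αF) * N - 2 * ε * N + 2) := by
        linarith only [hNF_le, h1, h2, h3.le, h3.ge, h4.le, h4.ge]
      have h6 : S.αF * N + ((S.params.μ - S.αF) * N - 2 * ε * N + 2)
          = S.params.μ * N - 2 * (ε * N) + 2 := by ring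
      linarith only [h5, h6.le, h2ε]
    have hlamH : 1 - lambdaA (S.inst N) (devProfile S σ' N) WState.H
        ≤ Real.exp (-(3 * ε ^ 2 / 32) * ((S.inst N).N : ℝ)) := by
      rw [lambdaA_eq_tailGE]
      apply one_sub_tailGE_le _ (fun n => pA_mem _ _ (hvalid N) n _) _ ε hε0 hε1
      rw [hmean WState.H, ← hph_def, hqH, hμI, hNN]
      have hK_ge : S.αC * N ≤ (K : ℝ) := by
        rw [hKreal]
        have hα : S.αC = 1 - S.αF - S.αU := by linarith
        rw [hα]
        linarith only [hNF_le, hNU_le]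
      have h1 : S.αC * N * (ts + γ) ≤ (K : ℝ) * (ts + γ) :=
        mul_le_mul_of_nonneg_right hK_ge hqH0
      have h3 : S.αC * N * ts = (S.params.μ - S.αF) * N := by
        rw [mul_comm (S.αC) (N:ℝ), mul_assoc, htsmul]; ring
      have h4 : S.αC * N * γ = 2 * ε * N := by rw [hεdef]; ring
      have h5 : S.αC * N * (ts + γ) = S.αC * N * ts + S.αC * N * γ := by ring
      have h6 : S.params.μ * N + ε * N
          ≤ (S.αF * N - 1) + ((S.params.μ - S.αF) * N + 2 * (ε * N)) + 1 - ε * N :=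
        le_of_eq (by ring)
      linarith only [h1, h3.le, h3.ge, h4.le, h4.ge, h5.le, h5.ge, hNF_ge, h2ε, h6]
    -- conclude
    have hEle : Real.exp (-(3 * ε ^ 2 / 32) * ((S.inst N).N : ℝ))
        ≤ Real.exp (-2 * (ε / 8) ^ 2 * (N : ℝ)) := by
      rw [hNN]
      apply Real.exp_le_exp.2
      have h := mul_nonneg (mul_nonneg hε0.le hε0.le) hN0
      linarith only [h]
    have hPL0 := S.params.hPL
    have hPH0 := S.params.hPH
    have hPsum := S.params.hPsum
    unfold fid
    rw [hPLI, hPHI]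
    set E : ℝ := Real.exp (-2 * (ε / 8) ^ 2 * (N : ℝ))
    have hE0 : 0 < E := Real.exp_pos _
    set lamL := lambdaA (S.inst N) (devProfile S σ' N) WState.L
    set lamH := lambdaA (S.inst N) (devProfile S σ' N) WState.H
    have hb1 : lamL ≤ E := le_trans hlamL hEle
    have hb2 : 1 - lamH ≤ E := le_trans hlamH hEle
    have hc1 : S.params.PL * (1 - E) ≤ S.params.PL * (1 - lamL) :=
      mul_le_mul_of_nonneg_left (by linarith) (le_of_lt hPL0)
    have hc2 : S.params.PH * (1 - E) ≤ S.params.PH * lamH :=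
      mul_le_mul_of_nonneg_left (by linarith) (le_of_lt hPH0)
    have hsE : (S.params.PL + S.params.PH) * (1 - E) = 1 - E := by rw [hPsum]; ring
    linarith only [hc1, hc2, hsE.le, hsE.ge, hE0]
  -- fidelity is at most one
  have hfid1 : ∀ N : ℕ, fid (S.inst N) (devProfile S σ' N) ≤ 1 := by
    intro N
    have hPeq : (S.inst N).toBParams = S.params := S.hshare N
    have hPLI : (S.inst N).PL = S.params.PL := by rw [hPeq]
    have hPHI : (S.inst N).PH = S.params.PH := by rw [hPeq]
    have hPL0 := S.params.hPL
    have hPH0 := S.params.hPH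
    have hPsum := S.params.hPsum
    have hlam : ∀ ω, 0 ≤ lambdaA (S.inst N) (devProfile S σ' N) ω
        ∧ lambdaA (S.inst N) (devProfile S σ' N) ω ≤ 1 := by
      intro ω
      rw [lambdaA_eq_tailGE]
      exact ⟨tailGE_nonneg _ (fun n => pA_mem _ _ (hvalid N) n _) _,
        tailGE_le_one _ (fun n => pA_mem _ _ (hvalid N) n _) _⟩
    have h1 := hlam WState.L
    have h2 := hlam WState.H
    have hc1 : S.params.PL * (1 - lambdaA (S.inst N) (devProfile S σ' N) WState.L)
        ≤ S.params.PL * 1 :=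
      mul_le_mul_of_nonneg_left (by linarith [h1.1]) (le_of_lt hPL0)
    have hc2 : S.params.PH * lambdaA (S.inst N) (devProfile S σ' N) WState.H
        ≤ S.params.PH * 1 :=
      mul_le_mul_of_nonneg_left h2.2 (le_of_lt hPH0)
    unfold fid
    rw [hPLI, hPHI]
    linarith only [hc1, hc2, hPsum.le, hPsum.ge]
  refine ⟨σ', hσ'mem, ⌈2 / ε⌉₊ + 1, ε / 8, Nat.succ_pos _, by positivity, key, ?_⟩
  -- convergence
  have hlow : Filter.Tendsto (fun N : ℕ => 1 - 2 * Real.exp (-2 * (ε / 8) ^ 2 * (N : ℝ)))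
      Filter.atTop (nhds 1) := by
    have hx : ∀ N : ℕ, Real.exp (-2 * (ε / 8) ^ 2 * (N : ℝ))
        = (Real.exp (-2 * (ε / 8) ^ 2)) ^ N := by
      intro N
      rw [← Real.exp_nat_mul]
      ring_nf
    have h0 : Filter.Tendsto (fun N : ℕ => Real.exp (-2 * (ε / 8) ^ 2 * (N : ℝ)))
        Filter.atTop (nhds 0) := by
      simp_rw [hx]
      apply tendsto_pow_atTop_nhds_zero_of_lt_one (Real.exp_nonneg _)
      rw [Real.exp_lt_one_iff]
      nlinarith
    have h1 := Filter.Tendsto.const_mul (2:ℝ) h0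
    have h2 := Filter.Tendsto.sub (tendsto_const_nhds (x := (1:ℝ)) (f := Filter.atTop)) h1
    simpa using h2
  apply tendsto_of_tendsto_of_tendsto_of_le_of_le' hlow
    (tendsto_const_nhds (x := (1:ℝ)))
  · filter_upwards [Filter.eventually_gt_atTop (⌈2 / ε⌉₊ + 1)] with N hN
    exact key N hN
  · exact Filter.Eventually.of_forall hfid1


end Voting
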